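/- Let 0 < C₀ ≤ 1, y ≥ 0, x ≥ C₀, and suppose either y ≥ C₀ or h(x) > h(y), where h(t) = t log t − t. Then |h(x) − h(y)| ≤ max(2, 2|log C₀|) · |x − y| · (|x − 1| + |y − 1|). -/

import Mathlib

/-- For `t ≥ C₀` with `0 < C₀ ≤ 1`, `|log t| ≤ max 2 (2|log C₀|) * |t - 1|`. -/
lemma log_bound_aux (C₀ t : ℝ) (h0 : 0 < C₀) (h1 : C₀ ≤ 1) (ht : C₀ ≤ t) :
    |Real.log t| ≤ max 2 (2 * |Real.log C₀|) * |t - 1| := by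
  have htpos : 0 < t := lt_of_lt_of_le h0 ht
  rcases le_or_gt 1 t with h | h
  · -- t ≥ 1
    have hlog : Real.log t ≤ t - 1 := Real.log_le_sub_one_of_pos htpos
    have hlogpos : 0 ≤ Real.log t := Real.log_nonneg h
    rw [abs_of_nonneg hlogpos, abs_of_nonneg (show (0:ℝ) ≤ t - 1 by linarith)]
    have h2 : (2:ℝ) ≤ max 2 (2 * |Real.log C₀|) := le_max_left _ _
    nlinarith [mul_nonneg (sub_nonneg.mpr h2) (sub_nonneg.mpr h)]
  · -- C₀ ≤ t < 1
    have hlogneg : Real.log t < 0 := Real.log_neg htpos h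
    rw [abs_of_neg hlogneg, abs_of_neg (by linarith : t - 1 < 0)]
    rcases le_or_gt (1/2 : ℝ) t with h2 | h2
    · -- -log t ≤ (1-t)/t ≤ 2(1-t)
      have hinv : Real.log t⁻¹ ≤ t⁻¹ - 1 :=
        Real.log_le_sub_one_of_pos (by positivity)
      rw [Real.log_inv] at hinv
      have htinv : t⁻¹ ≤ 2 := by
        rw [inv_le_comm₀ htpos (by norm_num)]; linarith
      have : -Real.log t ≤ 2 * (1 - t) := by
        have h3 : t⁻¹ - 1 ≤ 2 * (1 - t) := by
          have : t⁻¹ - 1 = (1 - t) / t := by field_simp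
          rw [this]
          rw [div_le_iff₀ htpos]
          nlinarith
        linarith
      have hM : (2:ℝ) ≤ max 2 (2 * |Real.log C₀|) := le_max_left _ _
      nlinarith
    · -- t < 1/2, so C₀ < 1/2 and |log C₀| ≥ log 2
      have hC₀lt : C₀ < 1 := lt_of_le_of_lt ht h2 |>.trans_le (by norm_num)
      have hlogC₀ : Real.log C₀ < 0 := Real.log_neg h0 hC₀lt
      have habs : |Real.log C₀| = -Real.log C₀ := abs_of_neg hlogC₀
      have hmono : Real.log C₀ ≤ Real.log t := Real.log_le_log h0 ht
      have hhalf : (1:ℝ)/2 ≤ 1 - t := by linarith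
      have key : -Real.log t ≤ 2 * |Real.log C₀| * (1 - t) := by
        rw [habs]
        nlinarith
      have hM : 2 * |Real.log C₀| ≤ max 2 (2 * |Real.log C₀|) := le_max_right _ _
      have h1t : 0 ≤ 1 - t := by linarith
      nlinarith

/-- MVT-type estimate for `h(t) = t log t - t` on `[C₀, ∞)`. -/
lemma h_diff_core (C₀ a b : ℝ) (h0 : 0 < C₀) (h1 : C₀ ≤ 1)
    (ha : C₀ ≤ a) (hb : C₀ ≤ b) :
    |(a * Real.log a - a) - (b * Real.log b - b)| ≤
      max 2 (2 * |Real.log C₀|) * |a - b| * (|a - 1| + |b - 1|) := by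
  set M := max 2 (2 * |Real.log C₀|) with hM
  have hMpos : (0:ℝ) < M := lt_of_lt_of_le (by norm_num) (le_max_left _ _)
  set K := M * (|a - 1| + |b - 1|) with hK
  have hconv : Convex ℝ (Set.uIcc a b) := convex_uIcc a b
  have hderiv : ∀ t ∈ Set.uIcc a b,
      HasDerivWithinAt (fun t => t * Real.log t - t) (Real.log t) (Set.uIcc a b) t := by
    intro t htmem
    have htC₀ : C₀ ≤ t := by
      rcases Set.mem_uIcc.mp htmem with ⟨h', _⟩ | ⟨h', _⟩
      · exact le_trans ha h'
      · exact le_trans hb h'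
    have htne : t ≠ 0 := ne_of_gt (lt_of_lt_of_le h0 htC₀)
    have := (Real.hasDerivAt_mul_log htne).sub (hasDerivAt_id' t)
    simpa [Pi.sub_def] using this.hasDerivWithinAt
  have hbound : ∀ t ∈ Set.uIcc a b, ‖Real.log t‖ ≤ K := by
    intro t htmem
    have htC₀ : C₀ ≤ t := by
      rcases Set.mem_uIcc.mp htmem with ⟨h', _⟩ | ⟨h', _⟩
      · exact le_trans ha h'
      · exact le_trans hb h'
    have hlog := log_bound_aux C₀ t h0 h1 htC₀
    have ht1 : |t - 1| ≤ |a - 1| + |b - 1| := by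
      rcases Set.mem_uIcc.mp htmem with ⟨h', h''⟩ | ⟨h', h''⟩ <;>
        cases abs_cases (a - 1) <;> cases abs_cases (b - 1) <;>
        cases abs_cases (t - 1) <;> linarith
    calc ‖Real.log t‖ = |Real.log t| := rfl
      _ ≤ M * |t - 1| := hlog
      _ ≤ M * (|a - 1| + |b - 1|) := by
          exact mul_le_mul_of_nonneg_left ht1 (le_of_lt hMpos)
  have := hconv.norm_image_sub_le_of_norm_hasDerivWithin_le hderiv hbound
    (Set.right_mem_uIcc) (Set.left_mem_uIcc)
  calc |(a * Real.log a - a) - (b * Real.log b - b)|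
      = ‖(a * Real.log a - a) - (b * Real.log b - b)‖ := rfl
    _ ≤ K * ‖a - b‖ := this
    _ = M * |a - b| * (|a - 1| + |b - 1|) := by
        simp only [Real.norm_eq_abs, hK]; ring

/-- `h` is antitone on `[0,1]`. -/
lemma h_antitone (y c : ℝ) (hy : 0 ≤ y) (hyc : y ≤ c) (hc : c ≤ 1) :
    c * Real.log c - c ≤ y * Real.log y - y := by
  have hcont : ContinuousOn (fun t => t * Real.log t - t) (Set.Icc (0:ℝ) 1) :=
    (Real.continuous_mul_log.sub continuous_id).continuousOn
  have hanti : AntitoneOn (fun t => t * Real.log t - t) (Set.Icc (0:ℝ) 1) := by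
    apply antitoneOn_of_deriv_nonpos (convex_Icc 0 1) hcont
    · intro t htmem
      rw [interior_Icc] at htmem
      have htne : t ≠ 0 := ne_of_gt htmem.1
      have hd : HasDerivAt (fun t => t * Real.log t - t) (Real.log t) t := by
        have := (Real.hasDerivAt_mul_log htne).sub (hasDerivAt_id' t)
        simpa [Pi.sub_def] using this
      exact hd.differentiableAt.differentiableWithinAt
    · intro t htmem
      rw [interior_Icc] at htmem
      have htne : t ≠ 0 := ne_of_gt htmem.1
      have hd : HasDerivAt (fun t => t * Real.log t - t) (Real.log t) t := by
        have := (Real.hasDerivAt_mul_log htne).sub (hasDerivAt_id' t)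
        simpa [Pi.sub_def] using this
      have hde : deriv (fun t => t * Real.log t - t) t = Real.log t := hd.deriv
      rw [hde]
      exact le_of_lt (Real.log_neg htmem.1 htmem.2)
  exact hanti ⟨hy, le_trans hyc hc⟩ ⟨le_trans hy hyc, hc⟩ hyc

/-- Pointwise estimate on `h(x) - h(y)` for `h(t) = t log t - t`. -/
theorem h_diff_estimate (C₀ x y : ℝ)
    (hC₀ : 0 < C₀) (hC₀' : C₀ ≤ 1) (hy : 0 ≤ y) (hx : C₀ ≤ x)
    (hcase : C₀ ≤ y ∨ (x * Real.log x - x) > (y * Real.log y - y)) :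
    |(x * Real.log x - x) - (y * Real.log y - y)| ≤
      max 2 (2 * |Real.log C₀|) * |x - y| * (|x - 1| + |y - 1|) := by
  set M := max 2 (2 * |Real.log C₀|) with hM
  have hMpos : (0:ℝ) < M := lt_of_lt_of_le (by norm_num) (le_max_left _ _)
  rcases le_or_gt C₀ y with hyC | hyC
  · exact h_diff_core C₀ x y hC₀ hC₀' hx hyC
  · -- y < C₀, so hcase gives h x > h y
    have hgt : (x * Real.log x - x) > (y * Real.log y - y) := by
      rcases hcase with h | h
      · exact absurd h (not_le.mpr hyC)
      · exact h
    have hmono : C₀ * Real.log C₀ - C₀ ≤ y * Real.log y - y :=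
      h_antitone y C₀ hy (le_of_lt hyC) hC₀'
    have hcore := h_diff_core C₀ x C₀ hC₀ hC₀' hx le_rfl
    have hxC : |x - C₀| ≤ |x - y| := by
      rw [abs_of_nonneg (by linarith), abs_of_nonneg (by linarith)]
      linarith
    have hC1 : |C₀ - 1| ≤ |y - 1| := by
      rw [abs_of_nonpos (by linarith), abs_of_nonpos (by linarith)]
      linarith
    have step1 : |(x * Real.log x - x) - (y * Real.log y - y)| ≤
        |(x * Real.log x - x) - (C₀ * Real.log C₀ - C₀)| := by
      rw [abs_of_pos (by linarith : (0:ℝ) < (x * Real.log x - x) - (y * Real.log y - y))]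
      rw [abs_of_nonneg (by linarith : (0:ℝ) ≤ (x * Real.log x - x) - (C₀ * Real.log C₀ - C₀))]
      linarith
    calc |(x * Real.log x - x) - (y * Real.log y - y)|
        ≤ |(x * Real.log x - x) - (C₀ * Real.log C₀ - C₀)| := step1
      _ ≤ M * |x - C₀| * (|x - 1| + |C₀ - 1|) := hcore
      _ ≤ M * |x - y| * (|x - 1| + |y - 1|) := by
          have h1 : M * |x - C₀| ≤ M * |x - y| :=
            mul_le_mul_of_nonneg_left hxC (le_of_lt hMpos)
          have h2 : |x - 1| + |C₀ - 1| ≤ |x - 1| + |y - 1| := by linarith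
          exact mul_le_mul h1 h2 (by positivity) (by positivity)
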